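/- Let U ∈ U(N) be a unitary matrix with all entries nonzero. For each differentiable function φ : (0,∞) → ℝ define W_φ ∈ M_N(ℂ) by (W_φ)_{ij} = sgn(U_{ij})·φ'(|U_{ij}|). Then the matrix W_φ·U* is self-adjoint for every differentiable φ : (0,∞) → ℝ if and only if U is semi-balanced, i.e. the matrices U_r·U* and U*·U_r are self-adjoint for every r > 0. -/

import Mathlib

open scoped Matrix

/-- the sign `sgn(z) = z/|z|` of a complex number (with `sgn 0 = 0`). -/
noncomputable def csgn (z : ℂ) : ℂ := z / ‖z‖

/-- the color component `U_r` of a matrix `U`. -/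
noncomputable def colorComp {n : Type*} (U : Matrix n n ℂ) (r : ℝ) :
    Matrix n n ℂ :=
  Matrix.of fun i j => if ‖U i j‖ = r then csgn (U i j) else 0

section aux
open Finset

lemma interp_aux (S : Finset ℝ) (c : ℝ → ℝ) :
    ∃ φ : ℝ → ℝ, (∀ x, DifferentiableAt ℝ φ x) ∧ ∀ s ∈ S, deriv φ s = c s := by
  classical
  set ψ : ℝ → ℝ → ℝ := fun s x => (x - s) * ∏ t ∈ S.erase s, (x - t) ^ 2 with hψ
  have hdiff : ∀ s x, DifferentiableAt ℝ (ψ s) x := fun s x =>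
    ((differentiableAt_id.sub_const s)).mul
      (DifferentiableAt.fun_finsetProd fun t _ => ((differentiableAt_id.sub_const t).pow 2))
  have hderiv_self : ∀ s, deriv (ψ s) s = ∏ t ∈ S.erase s, (s - t) ^ 2 := by
    intro s
    have h1 : HasDerivAt (fun x : ℝ => x - s) 1 s := (hasDerivAt_id s).sub_const s
    have h2 := (DifferentiableAt.fun_finsetProd (u := S.erase s)
      (f := fun t x => (x - t) ^ 2) (x := s)
      (fun t _ => ((differentiableAt_id.sub_const t).pow 2))).hasDerivAt
    have h3 := h1.fun_mul h2
    rw [hψ]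
    simp only
    rw [h3.deriv]
    simp
  have hderiv_other : ∀ s, ∀ a ∈ S.erase s, deriv (ψ s) a = 0 := by
    intro s a ha
    have key : ψ s = fun x => (x - a) ^ 2 *
        ((x - s) * ∏ t ∈ (S.erase s).erase a, (x - t) ^ 2) := by
      funext x
      rw [hψ]
      simp only
      rw [← Finset.mul_prod_erase _ _ ha]
      ring
    have h1 : HasDerivAt (fun x : ℝ => (x - a) ^ 2) 0 a := by
      have := ((hasDerivAt_id a).sub_const a).fun_pow 2
      simpa using this
    have h2 : DifferentiableAt ℝ (fun x : ℝ => (x - s) * ∏ t ∈ (S.erase s).erase a, (x - t) ^ 2) a :=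
      ((differentiableAt_id.sub_const s)).mul
        (DifferentiableAt.fun_finsetProd fun t _ => ((differentiableAt_id.sub_const t).pow 2))
    have h3 := h1.fun_mul h2.hasDerivAt
    rw [key, h3.deriv]
    simp
  set D : ℝ → ℝ := fun s => ∏ t ∈ S.erase s, (s - t) ^ 2 with hD
  have hDne : ∀ s ∈ S, D s ≠ 0 := by
    intro s _
    refine Finset.prod_ne_zero_iff.mpr fun t ht => pow_ne_zero _ (sub_ne_zero.mpr ?_)
    exact (Finset.ne_of_mem_erase ht).symm
  refine ⟨fun x => ∑ s ∈ S, (c s / D s) * ψ s x, fun x =>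
    DifferentiableAt.fun_sum fun s _ => (hdiff s x).const_mul _, fun s hs => ?_⟩
  rw [deriv_fun_sum (fun t _ => ((hdiff t s).const_mul _))]
  rw [Finset.sum_eq_single s]
  · rw [deriv_const_mul _ (hdiff s s), hderiv_self s]
    rw [show (∏ t ∈ S.erase s, (s - t) ^ 2) = D s from rfl]
    rw [div_mul_eq_mul_div, mul_div_assoc, div_self (hDne s hs), mul_one]
  · intro t ht hts
    rw [deriv_const_mul _ (hdiff t s), hderiv_other t s (Finset.mem_erase.mpr ⟨hts.symm, hs⟩)]
    ring
  · intro h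
    exact absurd hs h


lemma flip_herm {N : ℕ} {U W : Matrix (Fin N) (Fin N) ℂ}
    (hU : U ∈ Matrix.unitaryGroup (Fin N) ℂ)
    (h : (W * Uᴴ).IsHermitian) : (Uᴴ * W).IsHermitian := by
  have h1 : Uᴴ * U = 1 := by
    simpa [Matrix.star_eq_conjTranspose] using hU.1
  have h' : U * Wᴴ = W * Uᴴ := by
    have := h.eq
    rw [Matrix.conjTranspose_mul, Matrix.conjTranspose_conjTranspose] at this
    exact this
  show (Uᴴ * W)ᴴ = Uᴴ * W
  rw [Matrix.conjTranspose_mul, Matrix.conjTranspose_conjTranspose]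
  calc Wᴴ * U = 1 * Wᴴ * U := by rw [one_mul]
    _ = Uᴴ * U * Wᴴ * U := by rw [h1]
    _ = Uᴴ * (U * Wᴴ) * U := by rw [Matrix.mul_assoc Uᴴ U Wᴴ]
    _ = Uᴴ * (W * Uᴴ) * U := by rw [h']
    _ = Uᴴ * W * (Uᴴ * U) := by rw [← Matrix.mul_assoc, Matrix.mul_assoc (Uᴴ * W)]
    _ = Uᴴ * W := by rw [h1, mul_one]

end aux

/-- For `U ∈ U(N)` with nonzero entries, the matrices
`W_φ·U*` (with `(W_φ)_{ij} = sgn(U_{ij}) φ'(|U_{ij}|)`) are self-adjoint for all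
differentiable `φ : (0,∞) → ℝ` iff `U` is semi-balanced, i.e. `U_r·U*` and
`U*·U_r` are self-adjoint for all `r > 0`. -/
theorem stmt3 (N : ℕ) (U : Matrix (Fin N) (Fin N) ℂ)
    (hU : U ∈ Matrix.unitaryGroup (Fin N) ℂ) (hne : ∀ i j, U i j ≠ 0) :
    (∀ φ : ℝ → ℝ, (∀ x > (0 : ℝ), DifferentiableAt ℝ φ x) →
      ((Matrix.of fun i j => csgn (U i j) * deriv φ ‖U i j‖) * Uᴴ).IsHermitian) ↔
    (∀ r : ℝ, 0 < r →
      (colorComp U r * Uᴴ).IsHermitian ∧ (Uᴴ * colorComp U r).IsHermitian) := by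
  classical
  set S : Finset ℝ :=
    Finset.image (fun p : Fin N × Fin N => ‖U p.1 p.2‖) Finset.univ with hS
  have hmem : ∀ i j, ‖U i j‖ ∈ S := fun i j =>
    Finset.mem_image.mpr ⟨(i, j), Finset.mem_univ _, rfl⟩
  have hpos : ∀ r ∈ S, 0 < r := by
    intro r hr
    obtain ⟨p, -, rfl⟩ := Finset.mem_image.mp hr
    exact norm_pos_iff.mpr (hne p.1 p.2)
  constructor
  · intro h r hr
    by_cases hrS : r ∈ S
    · obtain ⟨φ, hφd, hφ⟩ := interp_aux S (fun s => if s = r then 1 else 0)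
      have hW := h φ (fun x _ => hφd x)
      have hWe : (Matrix.of fun i j =>
          csgn (U i j) * (Complex.ofReal (deriv φ (‖U i j‖)))) = colorComp U r := by
        ext i j
        simp only [Matrix.of_apply, colorComp]
        rw [hφ _ (hmem i j)]
        split_ifs with hc <;> simp
      rw [hWe] at hW
      exact ⟨hW, flip_herm hU hW⟩
    · have hc : colorComp U r = 0 := by
        ext i j
        simp only [colorComp, Matrix.of_apply, Matrix.zero_apply]
        rw [if_neg]
        exact fun hcon => hrS (hcon ▸ hmem i j)
      rw [hc]
      constructor
      · rw [Matrix.zero_mul]; exact Matrix.isHermitian_zero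
      · rw [Matrix.mul_zero]; exact Matrix.isHermitian_zero
  · intro h φ hφd
    have hWsum : (Matrix.of fun i j =>
        csgn (U i j) * (Complex.ofReal (deriv φ (‖U i j‖))))
        = ∑ r ∈ S, (Complex.ofReal (deriv φ r)) • colorComp U r := by
      ext i j
      simp only [Matrix.of_apply, Matrix.sum_apply, Matrix.smul_apply, colorComp,
        smul_eq_mul, mul_ite, mul_zero, Finset.sum_ite_eq, hmem i j, if_true]
      ring
    rw [hWsum, Finset.sum_mul]
    show _ = _
    rw [Matrix.conjTranspose_sum]
    refine Finset.sum_congr rfl fun r hr => ?_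
    rw [Matrix.smul_mul, Matrix.conjTranspose_smul, (h r (hpos r hr)).1.eq]
    congr 1
    exact Complex.conj_ofReal _
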